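/- arXiv:1505.01265 — 2 statements merged into one kernel-verified Lean document; each statement's English description precedes it below -/
import Mathlib

section
/- Schrijver's number bounds the independence number: for every finite simple graph G, α(G) ≤ ϑ⁻(G). -/
open Finset

namespace SimpleGraph

variable {V W : Type*}

/-- The strong graph product. -/
def strongProd (G : SimpleGraph V) (H : SimpleGraph W) : SimpleGraph (V × W) where
  Adj x y := x ≠ y ∧ (x.1 = y.1 ∨ G.Adj x.1 y.1) ∧ (x.2 = y.2 ∨ H.Adj x.2 y.2)
  symm := ⟨by
    rintro x y ⟨hne, h1, h2⟩
    exact ⟨hne.symm, h1.imp Eq.symm (fun h => G.adj_symm h), h2.imp Eq.symm (fun h => H.adj_symm h)⟩⟩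
  loopless := ⟨by rintro x ⟨hne, -, -⟩; exact hne rfl⟩

/-- The disjunctive graph product. -/
def disjProd (G : SimpleGraph V) (H : SimpleGraph W) : SimpleGraph (V × W) where
  Adj x y := G.Adj x.1 y.1 ∨ H.Adj x.2 y.2
  symm := ⟨fun _ _ h => h.imp (fun h => G.adj_symm h) (fun h => H.adj_symm h)⟩
  loopless := ⟨fun x h => h.elim (fun h => G.irrefl h) (fun h => H.irrefl h)⟩

/-- A finite set of vertices is independent if no two of its members are adjacent. -/
def IsIndep (G : SimpleGraph V) (s : Finset V) : Prop :=
  ∀ ⦃v⦄, v ∈ s → ∀ ⦃w⦄, w ∈ s → ¬ G.Adj v w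

/-- The independence number. -/
noncomputable def alpha (G : SimpleGraph V) [Fintype V] : ℕ :=
  sSup {n | ∃ s : Finset V, G.IsIndep s ∧ s.card = n}

/-- The fractional packing number. -/
noncomputable def alphaStar (G : SimpleGraph V) [Fintype V] : ℝ :=
  sSup {x | ∃ t : V → ℝ, (∀ v, 0 ≤ t v) ∧
    (∀ C : Finset V, G.IsClique (C : Set V) → ∑ v ∈ C, t v ≤ 1) ∧ x = ∑ v, t v}

/-- The Lovász number. -/
noncomputable def lovTheta (G : SimpleGraph V) [Fintype V] : ℝ :=
  sSup {x | ∃ B : Matrix V V ℝ, B.PosSemidef ∧ B.trace = 1 ∧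
    (∀ v w, G.Adj v w → B v w = 0) ∧ x = ∑ v, ∑ w, B v w}

/-- Schrijver's variant of the Lovász number. -/
noncomputable def thetaMinus (G : SimpleGraph V) [Fintype V] : ℝ :=
  sSup {x | ∃ B : Matrix V V ℝ, B.PosSemidef ∧ B.trace = 1 ∧ (∀ v w, 0 ≤ B v w) ∧
    (∀ v w, G.Adj v w → B v w = 0) ∧ x = ∑ v, ∑ w, B v w}

/-- Szegedy's variant of the Lovász number. -/
noncomputable def thetaPlus (G : SimpleGraph V) [Fintype V] : ℝ :=
  sSup {x | ∃ B : Matrix V V ℝ, B.PosSemidef ∧ B.trace = 1 ∧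
    (∀ v w, G.Adj v w → B v w ≤ 0) ∧ x = ∑ v, ∑ w, B v w}

/-- The clique covering number. -/
noncomputable def cliqueCoverNum (G : SimpleGraph V) [Fintype V] : ℕ :=
  sInf {n | ∃ C : Fin n → Finset V, (∀ i, G.IsClique (C i : Set V)) ∧ ∀ v, ∃ i, v ∈ C i}

/-- The blow-up of a graph along integer vertex weights. -/
def blup (G : SimpleGraph V) (p : V → ℕ) : SimpleGraph (Σ v, Fin (p v)) where
  Adj x y := G.Adj x.1 y.1
  symm := ⟨fun _ _ h => G.adj_symm h⟩
  loopless := ⟨fun x h => G.irrefl h⟩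

/-- The weighted independence number (integer weights). -/
noncomputable def alphaWNat (G : SimpleGraph V) [Fintype V] (p : V → ℕ) : ℕ :=
  sSup {n | ∃ s : Finset V, G.IsIndep s ∧ n = ∑ v ∈ s, p v}

/-- The weighted independence number (real weights). -/
noncomputable def alphaW (G : SimpleGraph V) [Fintype V] (p : V → ℝ) : ℝ :=
  sSup {x | ∃ s : Finset V, G.IsIndep s ∧ x = ∑ v ∈ s, p v}

end SimpleGraph

open SimpleGraph
open scoped RealInnerProductSpace

open Finset in
lemma thetaMinus_bddAbove {V : Type*} [Fintype V] (G : SimpleGraph V) :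
    BddAbove {x | ∃ B : Matrix V V ℝ, B.PosSemidef ∧ B.trace = 1 ∧ (∀ v w, 0 ≤ B v w) ∧
      (∀ v w, G.Adj v w → B v w = 0) ∧ x = ∑ v, ∑ w, B v w} := by
  classical
  refine ⟨Fintype.card V, ?_⟩
  rintro x ⟨B, hpsd, htr, hnn, -, rfl⟩
  have key : ∀ v w, 2 * B v w ≤ B v v + B w w := by
    intro v w
    have h := (Matrix.posSemidef_iff_dotProduct_mulVec.mp hpsd).2 (Pi.single v (1:ℝ) - Pi.single w 1)
    have hsym : B w v = B v w := by
      have := congrFun (congrFun hpsd.1 v) w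
      simpa [Matrix.conjTranspose_apply] using this
    simp only [star_trivial, Matrix.mulVec_sub, Matrix.mulVec_single,
      dotProduct_sub, sub_dotProduct, dotProduct_single,
      single_dotProduct, mul_one, one_mul, MulOpposite.op_one, one_smul, Matrix.col_apply] at h
    -- h should now be an inequality in B entries
    nlinarith [h, hsym]
  have htr' : ∑ v, B v v = 1 := htr
  have e1 : ∑ v, ∑ _w : V, B v v = (Fintype.card V : ℝ) := by
    simp only [Finset.sum_const, Finset.card_univ, nsmul_eq_mul, ← Finset.mul_sum]
    rw [htr', mul_one]
  have e2 : ∑ v : V, ∑ w : V, B w w = (Fintype.card V : ℝ) := by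
    rw [Finset.sum_comm]; exact e1
  have hle : 2 * (∑ v, ∑ w, B v w) ≤ 2 * (Fintype.card V : ℝ) := by
    calc 2 * (∑ v, ∑ w, B v w) = ∑ v, ∑ w, 2 * B v w := by
          simp [Finset.mul_sum]
      _ ≤ ∑ v, ∑ w, (B v v + B w w) :=
          Finset.sum_le_sum fun v _ => Finset.sum_le_sum fun w _ => key v w
      _ = (∑ v, ∑ _w : V, B v v) + ∑ v : V, ∑ w : V, B w w := by
          rw [← Finset.sum_add_distrib]
          exact Finset.sum_congr rfl fun v _ => by rw [← Finset.sum_add_distrib]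
      _ = 2 * (Fintype.card V : ℝ) := by rw [e1, e2]; ring
  linarith

theorem alpha_le_thetaMinus {V : Type*} [Fintype V] (G : SimpleGraph V) :
    (G.alpha : ℝ) ≤ G.thetaMinus := by
  classical
  have hne : {n | ∃ s : Finset V, G.IsIndep s ∧ s.card = n}.Nonempty :=
    ⟨0, ∅, fun v hv => absurd hv (by simp), rfl⟩
  have hbdd : BddAbove {n | ∃ s : Finset V, G.IsIndep s ∧ s.card = n} := by
    refine ⟨Fintype.card V, ?_⟩
    rintro n ⟨s, -, rfl⟩
    exact s.card_le_univ.trans (by simp)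
  obtain ⟨s, hs, hcard⟩ : ∃ s : Finset V, G.IsIndep s ∧ s.card = G.alpha :=
    Nat.sSup_mem hne hbdd
  rcases Nat.eq_zero_or_pos G.alpha with h0 | hpos
  · rw [h0]
    push_cast
    apply Real.sSup_nonneg
    rintro x ⟨B, -, -, hnn, -, rfl⟩
    exact Finset.sum_nonneg fun v _ => Finset.sum_nonneg fun w _ => hnn v w
  · set n : ℕ := G.alpha with hn
    have hnR : (0:ℝ) < n := by exact_mod_cast hpos
    set c : ℝ := (n : ℝ)⁻¹ with hc
    set χ : V → ℝ := fun v => if v ∈ s then 1 else 0 with hχ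
    have hχ0 : ∀ v, 0 ≤ χ v := by
      intro v; by_cases h : v ∈ s <;> simp [hχ, h]
    have hχsq : ∀ v, χ v * χ v = χ v := by
      intro v; by_cases h : v ∈ s <;> simp [hχ, h]
    have hχsum : ∑ v, χ v = (n : ℝ) := by
      rw [← hcard]
      simp [hχ]
    set B : Matrix V V ℝ := Matrix.of fun v w => c * (χ v * χ w) with hB
    have hrow : ∀ v, ∑ w, B v w = χ v * (c * (n : ℝ)) := by
      intro v
      have : ∑ w, c * (χ v * χ w) = χ v * (c * ∑ w, χ w) := by
        rw [Finset.mul_sum, Finset.mul_sum]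
        exact Finset.sum_congr rfl fun w _ => by ring
      simp only [hB, Matrix.of_apply]
      rw [this, hχsum]
    have hBmem : (n : ℝ) ∈ {x | ∃ B : Matrix V V ℝ, B.PosSemidef ∧ B.trace = 1 ∧
        (∀ v w, 0 ≤ B v w) ∧ (∀ v w, G.Adj v w → B v w = 0) ∧ x = ∑ v, ∑ w, B v w} := by
      refine ⟨B, Matrix.posSemidef_iff_dotProduct_mulVec.mpr ⟨?_, ?_⟩, ?_, ?_, ?_, ?_⟩
      · ext v w
        simp only [hB, Matrix.conjTranspose_apply, Matrix.of_apply, star_trivial]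
        ring
      · intro x
        have hq : dotProduct (star x) (B.mulVec x)
            = c * ((∑ v, χ v * x v) * (∑ v, χ v * x v)) := by
          simp only [star_trivial, dotProduct, Matrix.mulVec, hB, Matrix.of_apply]
          have hrow' : ∀ v, x v * ∑ w, c * (χ v * χ w) * x w
              = (χ v * x v) * (c * ∑ w, χ w * x w) := by
            intro v
            simp only [Finset.mul_sum]
            exact Finset.sum_congr rfl fun w _ => by ring
          calc ∑ v, x v * ∑ w, c * (χ v * χ w) * x w
              = ∑ v, (χ v * x v) * (c * ∑ w, χ w * x w) :=
                Finset.sum_congr rfl fun v _ => hrow' v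
            _ = (∑ v, χ v * x v) * (c * ∑ w, χ w * x w) := by rw [← Finset.sum_mul]
            _ = c * ((∑ v, χ v * x v) * (∑ v, χ v * x v)) := by ring
        rw [hq]
        have hc0 : 0 ≤ c := by rw [hc]; positivity
        nlinarith [mul_self_nonneg (∑ v, χ v * x v)]
      · have : B.trace = c * ∑ v, χ v := by
          simp only [Matrix.trace, Matrix.diag, hB, Matrix.of_apply, Finset.mul_sum]
          exact Finset.sum_congr rfl fun v _ => by rw [hχsq v]
        rw [this, hχsum, hc]
        field_simp
      · intro v w
        simp only [hB, Matrix.of_apply]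
        have h1 := hχ0 v
        have h2 := hχ0 w
        have hc0 : 0 ≤ c := by rw [hc]; positivity
        positivity
      · intro v w hadj
        simp only [hB, Matrix.of_apply, hχ]
        by_cases hv : v ∈ s
        · by_cases hw : w ∈ s
          · exact absurd hadj (hs hv hw)
          · simp [hv, hw]
        · simp [hv]
      · rw [Finset.sum_congr rfl fun v _ => hrow v, ← Finset.sum_mul, hχsum, hc]
        field_simp
    exact le_csSup (thetaMinus_bddAbove G) hBmem
end

section
/- For any graph G, ϑ⁺(G) equals the maximum of Σ_v |⟨h, φ_v⟩|² over all obtuse representations {φ_v} of the complement Ḡ together with a consistent unit vector h. In particular, from any optimal primal SDP solution B for ϑ⁺(G) one constructs such a representation with value at least tr(BJ), and conversely from any such representation one constructs a feasible B with tr(BJ) at least the representation's value. -/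
open Finset

open SimpleGraph
open scoped RealInnerProductSpace

lemma euclid_inner {d : ℕ} (x y : EuclideanSpace ℝ (Fin d)) : ⟪x, y⟫ = ∑ i, x i * y i := by
  simp [PiLp.inner_apply, RCLike.inner_apply, mul_comm]

noncomputable def ap {n m : ℕ} (x : EuclideanSpace ℝ (Fin n)) (a : EuclideanSpace ℝ (Fin m)) :
    EuclideanSpace ℝ (Fin (n + m)) := WithLp.toLp 2 (fun i => Fin.append x a i)

lemma ap_inner {n m : ℕ} (x y : EuclideanSpace ℝ (Fin n)) (a b : EuclideanSpace ℝ (Fin m)) :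
    ⟪ap x a, ap y b⟫ = ⟪x, y⟫ + ⟪a, b⟫ := by
  rw [euclid_inner, euclid_inner, euclid_inner, Fin.sum_univ_add]
  simp [ap, Fin.append_left, Fin.append_right]

lemma norm_one_of_sq {E : Type*} [NormedAddCommGroup E] {u : E} (hsq : ‖u‖ ^ 2 = 1) :
    ‖u‖ = 1 := by
  rw [← Real.sqrt_sq (norm_nonneg u), hsq, Real.sqrt_one]

lemma ap_norm_sq {n m : ℕ} (x : EuclideanSpace ℝ (Fin n)) (a : EuclideanSpace ℝ (Fin m)) :
    ‖ap x a‖ ^ 2 = ‖x‖ ^ 2 + ‖a‖ ^ 2 := by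
  rw [← real_inner_self_eq_norm_sq, ← real_inner_self_eq_norm_sq,
    ← real_inner_self_eq_norm_sq, ap_inner]

lemma zero_mem_repset {V : Type*} [Fintype V] (G : SimpleGraph V) :
    (0:ℝ) ∈ {x : ℝ | ∃ (d : ℕ) (φ : V → EuclideanSpace ℝ (Fin d))
      (h : EuclideanSpace ℝ (Fin d)),
      (∀ v, ‖φ v‖ = 1) ∧ (∀ v w, G.Adj v w → ⟪φ v, φ w⟫ ≤ 0) ∧
      ‖h‖ = 1 ∧ (∀ v, 0 ≤ ⟪h, φ v⟫) ∧ x = ∑ v, ⟪h, φ v⟫ ^ 2} := by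
  classical
  set n := Fintype.card V
  set e := Fintype.equivFin V
  have key : ∀ v : V, ⟪(EuclideanSpace.single (Fin.last n) 1 : EuclideanSpace ℝ (Fin (n+1))),
      EuclideanSpace.single ((e v).castSucc) 1⟫ = (0:ℝ) := by
    intro v
    rw [euclid_inner]
    simp [EuclideanSpace.single_apply, ((Fin.castSucc_lt_last (e v)).ne : (e v).castSucc ≠ Fin.last n)]
    exact Fin.castSucc_ne_last _
  refine ⟨n + 1, fun v => EuclideanSpace.single ((e v).castSucc) 1,
    EuclideanSpace.single (Fin.last n) 1, fun v => by simp, fun v w hadj => ?_, by simp,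
    fun v => by rw [key], by simp [key]⟩
  · rw [euclid_inner]
    simp [EuclideanSpace.single_apply, Fin.castSucc_inj, (e.injective.ne hadj.ne : e v ≠ e w).symm]

lemma bddAbove_repset {V : Type*} [Fintype V] (G : SimpleGraph V) :
    BddAbove {x : ℝ | ∃ (d : ℕ) (φ : V → EuclideanSpace ℝ (Fin d))
      (h : EuclideanSpace ℝ (Fin d)),
      (∀ v, ‖φ v‖ = 1) ∧ (∀ v w, G.Adj v w → ⟪φ v, φ w⟫ ≤ 0) ∧
      ‖h‖ = 1 ∧ (∀ v, 0 ≤ ⟪h, φ v⟫) ∧ x = ∑ v, ⟪h, φ v⟫ ^ 2} := by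
  refine ⟨(Fintype.card V : ℝ), ?_⟩
  rintro x ⟨d, φ, h, h1, _, h3, _, rfl⟩
  calc ∑ v, ⟪h, φ v⟫ ^ 2 ≤ ∑ _v : V, (1:ℝ) := by
        refine Finset.sum_le_sum fun v _ => ?_
        have := real_inner_mul_inner_self_le h (φ v)
        rw [real_inner_self_eq_norm_sq, real_inner_self_eq_norm_sq, h3, h1] at this
        nlinarith [this]
    _ = (Fintype.card V : ℝ) := by simp

lemma gram_posSemidef {V : Type*} [Fintype V] {d : ℕ} (ψ : V → EuclideanSpace ℝ (Fin d)) :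
    (Matrix.of fun v w => (⟪ψ v, ψ w⟫ : ℝ)).PosSemidef := by
  have key : (Matrix.of fun v w => (⟪ψ v, ψ w⟫ : ℝ)) =
      (Matrix.of fun i v => ψ v i : Matrix (Fin d) V ℝ).conjTranspose *
      (Matrix.of fun i v => ψ v i : Matrix (Fin d) V ℝ) := by
    ext v w
    simp [Matrix.mul_apply, euclid_inner]
  rw [key]
  exact Matrix.posSemidef_conjTranspose_mul_self _

open scoped MatrixOrder in
lemma psd_gram {V : Type*} [Fintype V] [DecidableEq V] {B : Matrix V V ℝ} (hB : B.PosSemidef) :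
    ∃ ψ : V → EuclideanSpace ℝ (Fin (Fintype.card V)), ∀ v w, B v w = ⟪ψ v, ψ w⟫ := by
  set e := Fintype.equivFin V
  obtain ⟨C, hC⟩ := CStarAlgebra.nonneg_iff_eq_star_mul_self.mp hB.nonneg
  refine ⟨fun v => WithLp.toLp 2 (fun i => C (e.symm i) v), fun v w => ?_⟩
  rw [euclid_inner]
  rw [← Fintype.sum_equiv e (fun u => C u v * C u w) _ (fun u => by simp)]
  rw [hC, Matrix.mul_apply]
  simp [Matrix.star_apply]

lemma gram_sum {V : Type*} [Fintype V] {d : ℕ} (ψ : V → EuclideanSpace ℝ (Fin d)) :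
    ∑ v, ∑ w, (⟪ψ v, ψ w⟫ : ℝ) = ‖∑ v, ψ v‖ ^ 2 := by
  rw [← real_inner_self_eq_norm_sq, sum_inner]
  exact Finset.sum_congr rfl fun v _ => by rw [inner_sum]

lemma bddAbove_sdpset {V : Type*} [Fintype V] (G : SimpleGraph V) :
    BddAbove {x : ℝ | ∃ B : Matrix V V ℝ, B.PosSemidef ∧ B.trace = 1 ∧
      (∀ v w, G.Adj v w → B v w ≤ 0) ∧ x = ∑ v, ∑ w, B v w} := by
  classical
  refine ⟨(Fintype.card V : ℝ), ?_⟩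
  rintro x ⟨B, hpsd, htr, _, rfl⟩
  obtain ⟨ψ, hψ⟩ := psd_gram hpsd
  have hx : ∑ v, ∑ w, B v w = ‖∑ v, ψ v‖ ^ 2 := by
    rw [← gram_sum]
    exact Finset.sum_congr rfl fun v _ => Finset.sum_congr rfl fun w _ => hψ v w
  have htr' : ∑ v, ‖ψ v‖ ^ 2 = 1 := by
    rw [← htr, Matrix.trace]
    refine (Finset.sum_congr rfl fun v _ => ?_).symm
    rw [Matrix.diag_apply, hψ v v, real_inner_self_eq_norm_sq]
  have h1 : ‖∑ v, ψ v‖ ≤ ∑ v, ‖ψ v‖ := norm_sum_le _ _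
  have h2 : (∑ v, ‖ψ v‖) ^ 2 ≤ (Fintype.card V : ℝ) := by
    have := Finset.sum_mul_sq_le_sq_mul_sq Finset.univ (fun _ : V => (1:ℝ)) (fun v => ‖ψ v‖)
    simp only [one_mul, one_pow] at this
    simpa [htr'] using this
  rw [hx]
  calc ‖∑ v, ψ v‖ ^ 2 ≤ (∑ v, ‖ψ v‖) ^ 2 := by
        have h0 : (0:ℝ) ≤ ‖∑ v, ψ v‖ := norm_nonneg _
        nlinarith
    _ ≤ _ := h2

lemma one_mem_sdpset {V : Type*} [Fintype V] [Nonempty V] (G : SimpleGraph V) :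
    (1:ℝ) ∈ {x : ℝ | ∃ B : Matrix V V ℝ, B.PosSemidef ∧ B.trace = 1 ∧
      (∀ v w, G.Adj v w → B v w ≤ 0) ∧ x = ∑ v, ∑ w, B v w} := by
  classical
  set n := Fintype.card V
  have hn : (0:ℝ) < (n:ℝ) := by
    have := Fintype.card_pos (α := V)
    exact_mod_cast this
  set e := Fintype.equivFin V
  set ψ : V → EuclideanSpace ℝ (Fin n) :=
    fun v => (Real.sqrt (n:ℝ))⁻¹ • EuclideanSpace.single (e v) 1 with hψdef
  have hinner : ∀ v w : V, ⟪ψ v, ψ w⟫ = if v = w then (n:ℝ)⁻¹ else 0 := by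
    intro v w
    rw [euclid_inner]
    simp only [hψdef, PiLp.smul_apply, EuclideanSpace.single_apply, smul_eq_mul]
    have hsum : ∀ i : Fin n, (Real.sqrt (n:ℝ))⁻¹ * (if i = e v then (1:ℝ) else 0) *
        ((Real.sqrt (n:ℝ))⁻¹ * (if i = e w then (1:ℝ) else 0)) =
        if i = e v ∧ i = e w then ((Real.sqrt (n:ℝ))⁻¹)^2 else 0 := by
      intro i
      split_ifs <;> first | (exfalso; tauto) | ring
    rw [Finset.sum_congr rfl fun i _ => hsum i]
    have hs : ((Real.sqrt (n:ℝ))⁻¹)^2 = (n:ℝ)⁻¹ := by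
      rw [← Real.sqrt_inv, Real.sq_sqrt (by positivity)]
    by_cases hvw : v = w
    · subst hvw
      simp [hs]
    · have hne : e v ≠ e w := e.injective.ne hvw
      rw [Finset.sum_eq_zero, if_neg hvw]
      intro i _
      rw [if_neg]
      rintro ⟨r1, r2⟩
      exact hne (r1 ▸ r2 ▸ rfl)
  refine ⟨Matrix.of fun v w => ⟪ψ v, ψ w⟫, gram_posSemidef ψ, ?_, ?_, ?_⟩
  · rw [Matrix.trace]
    simp only [Matrix.diag_apply, Matrix.of_apply, hinner, if_pos rfl]
    rw [Finset.sum_const, Finset.card_univ, nsmul_eq_mul]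
    exact mul_inv_cancel₀ hn.ne'
  · intro v w hadj
    simp [Matrix.of_apply, hinner, hadj.ne]
  · simp only [Matrix.of_apply, hinner]
    rw [Finset.sum_congr rfl fun v _ => Finset.sum_ite_eq Finset.univ v (fun _ => ((n:ℝ)⁻¹))]
    simp only [Finset.mem_univ, if_pos]
    rw [Finset.sum_const, Finset.card_univ, nsmul_eq_mul]
    exact (mul_inv_cancel₀ hn.ne').symm

lemma sdp_nonneg {V : Type*} [Fintype V] (G : SimpleGraph V) :
    0 ≤ sSup {x : ℝ | ∃ B : Matrix V V ℝ, B.PosSemidef ∧ B.trace = 1 ∧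
      (∀ v w, G.Adj v w → B v w ≤ 0) ∧ x = ∑ v, ∑ w, B v w} := by
  rcases isEmpty_or_nonempty V with hV | hV
  · have hS : {x : ℝ | ∃ B : Matrix V V ℝ, B.PosSemidef ∧ B.trace = 1 ∧
        (∀ v w, G.Adj v w → B v w ≤ 0) ∧ x = ∑ v, ∑ w, B v w} = ∅ := by
      refine Set.eq_empty_iff_forall_notMem.2 ?_
      rintro x ⟨B, _, htr, _, _⟩
      rw [Matrix.trace, Finset.univ_eq_empty, Finset.sum_empty] at htr
      exact one_ne_zero htr.symm
    rw [hS, Real.sSup_empty]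
  · exact le_trans zero_le_one (le_csSup (bddAbove_sdpset G) (one_mem_sdpset G))

lemma rep_le_sdp {V : Type*} [Fintype V] (G : SimpleGraph V) (x : ℝ)
    (hx : x ∈ {x : ℝ | ∃ (d : ℕ) (φ : V → EuclideanSpace ℝ (Fin d))
      (h : EuclideanSpace ℝ (Fin d)),
      (∀ v, ‖φ v‖ = 1) ∧ (∀ v w, G.Adj v w → ⟪φ v, φ w⟫ ≤ 0) ∧
      ‖h‖ = 1 ∧ (∀ v, 0 ≤ ⟪h, φ v⟫) ∧ x = ∑ v, ⟪h, φ v⟫ ^ 2}) :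
    x ≤ sSup {x : ℝ | ∃ B : Matrix V V ℝ, B.PosSemidef ∧ B.trace = 1 ∧
      (∀ v w, G.Adj v w → B v w ≤ 0) ∧ x = ∑ v, ∑ w, B v w} := by
  obtain ⟨d, φ, h, h1, h2, h3, h4, hx⟩ := hx
  set c : V → ℝ := fun v => ⟪h, φ v⟫ with hc
  have hxnn : 0 ≤ x := hx ▸ Finset.sum_nonneg fun v _ => sq_nonneg _
  rcases eq_or_lt_of_le hxnn with hx0 | hxpos
  · rw [← hx0]; exact sdp_nonneg G
  have hsx : 0 < Real.sqrt x := Real.sqrt_pos.2 hxpos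
  have hss : (Real.sqrt x)⁻¹ * (Real.sqrt x)⁻¹ = x⁻¹ := by
    rw [← mul_inv, Real.mul_self_sqrt hxnn]
  set ψ : V → EuclideanSpace ℝ (Fin d) := fun v => (Real.sqrt x)⁻¹ • (c v • φ v) with hψ
  have hinner : ∀ v w : V, ⟪ψ v, ψ w⟫ = x⁻¹ * (c v * (c w * ⟪φ v, φ w⟫)) := by
    intro v w
    rw [hψ]
    simp only [real_inner_smul_left, real_inner_smul_right]
    rw [← hss]; ring
  have hmem : (∑ v, ∑ w, (⟪ψ v, ψ w⟫:ℝ)) ∈ {x : ℝ | ∃ B : Matrix V V ℝ, B.PosSemidef ∧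
      B.trace = 1 ∧ (∀ v w, G.Adj v w → B v w ≤ 0) ∧ x = ∑ v, ∑ w, B v w} := by
    refine ⟨Matrix.of fun v w => ⟪ψ v, ψ w⟫, gram_posSemidef ψ, ?_, ?_, rfl⟩
    · rw [Matrix.trace]
      have : ∀ v : V, (Matrix.of fun v w => (⟪ψ v, ψ w⟫:ℝ)).diag v = x⁻¹ * c v ^ 2 := by
        intro v
        rw [Matrix.diag_apply, Matrix.of_apply, hinner v v, real_inner_self_eq_norm_sq, h1 v]
        ring
      rw [Finset.sum_congr rfl fun v _ => this v, ← Finset.mul_sum, ← hx]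
      exact inv_mul_cancel₀ hxpos.ne'
    · intro v w hadj
      rw [Matrix.of_apply, hinner v w]
      have hcv := h4 v
      have hcw := h4 w
      have := h2 v w hadj
      have hxi : (0:ℝ) ≤ x⁻¹ := by positivity
      have t1 : c w * ⟪φ v, φ w⟫ ≤ 0 := by
        calc c w * ⟪φ v, φ w⟫ ≤ c w * 0 := mul_le_mul_of_nonneg_left this hcw
          _ = 0 := mul_zero _
      have t2 : c v * (c w * ⟪φ v, φ w⟫) ≤ 0 := by
        calc c v * (c w * ⟪φ v, φ w⟫) ≤ c v * 0 := mul_le_mul_of_nonneg_left t1 hcv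
          _ = 0 := mul_zero _
      calc x⁻¹ * (c v * (c w * ⟪φ v, φ w⟫)) ≤ x⁻¹ * 0 := mul_le_mul_of_nonneg_left t2 hxi
        _ = 0 := mul_zero _
  refine le_trans ?_ (le_csSup (bddAbove_sdpset G) hmem)
  rw [gram_sum]
  have hhs : ⟪h, ∑ v, ψ v⟫ = Real.sqrt x := by
    rw [inner_sum]
    have : ∀ v : V, ⟪h, ψ v⟫ = (Real.sqrt x)⁻¹ * c v ^ 2 := by
      intro v
      rw [hψ]
      simp only [real_inner_smul_right]
      have hcv : (⟪h, φ v⟫:ℝ) = c v := rfl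
      rw [hcv]; ring
    rw [Finset.sum_congr rfl fun v _ => this v, ← Finset.mul_sum, ← hx,
      inv_mul_eq_div, Real.div_sqrt]
  have hCS := real_inner_mul_inner_self_le h (∑ v, ψ v)
  rw [hhs, real_inner_self_eq_norm_sq, real_inner_self_eq_norm_sq, h3] at hCS
  rw [Real.mul_self_sqrt hxnn] at hCS
  nlinarith

lemma sdp_le_rep {V : Type*} [Fintype V] (G : SimpleGraph V) (x : ℝ)
    (hx : x ∈ {x : ℝ | ∃ B : Matrix V V ℝ, B.PosSemidef ∧ B.trace = 1 ∧
      (∀ v w, G.Adj v w → B v w ≤ 0) ∧ x = ∑ v, ∑ w, B v w}) :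
    x ≤ sSup {x : ℝ | ∃ (d : ℕ) (φ : V → EuclideanSpace ℝ (Fin d))
      (h : EuclideanSpace ℝ (Fin d)),
      (∀ v, ‖φ v‖ = 1) ∧ (∀ v w, G.Adj v w → ⟪φ v, φ w⟫ ≤ 0) ∧
      ‖h‖ = 1 ∧ (∀ v, 0 ≤ ⟪h, φ v⟫) ∧ x = ∑ v, ⟪h, φ v⟫ ^ 2} := by
  classical
  obtain ⟨B, hpsd, htr, hedge, hxeq⟩ := hx
  set n := Fintype.card V
  set e := Fintype.equivFin V
  obtain ⟨b, hb⟩ := psd_gram hpsd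
  set s : EuclideanSpace ℝ (Fin n) := ∑ v, b v with hsdef
  have hxs : x = ‖s‖ ^ 2 := by
    rw [hxeq, ← gram_sum]
    exact Finset.sum_congr rfl fun v _ => Finset.sum_congr rfl fun w _ => hb v w
  by_cases hs : s = 0
  · rw [hxs, hs, norm_zero]
    simpa using le_csSup (bddAbove_repset G) (zero_mem_repset G)
  have hns : 0 < ‖s‖ := norm_pos_iff.2 hs
  have htr' : ∑ v, ‖b v‖ ^ 2 = 1 := by
    rw [← htr, Matrix.trace]
    exact (Finset.sum_congr rfl fun v _ => by
      rw [Matrix.diag_apply, hb v v, real_inner_self_eq_norm_sq]).symm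
  -- the "good" vertices
  set T : Finset V := Finset.univ.filter (fun v => 0 < ⟪s, b v⟫) with hT
  have hbT : ∀ v ∈ T, (0:ℝ) < ⟪s, b v⟫ := fun v hv => (Finset.mem_filter.1 hv).2
  have hbne : ∀ v ∈ T, b v ≠ 0 := by
    intro v hv h0
    have := hbT v hv
    rw [h0, inner_zero_right] at this
    exact lt_irrefl _ this
  have hA : ‖s‖ ^ 2 ≤ ∑ v ∈ T, ⟪s, b v⟫ := by
    have h1 : ∑ v, (⟪s, b v⟫:ℝ) = ‖s‖ ^ 2 := by
      rw [← real_inner_self_eq_norm_sq, hsdef, inner_sum]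
    have h2 := Finset.sum_filter_add_sum_filter_not Finset.univ
      (fun v => 0 < ⟪s, b v⟫) (fun v => (⟪s, b v⟫:ℝ))
    have h3 : ∑ v ∈ Finset.univ.filter (fun v => ¬ 0 < ⟪s, b v⟫), (⟪s, b v⟫:ℝ) ≤ 0 :=
      Finset.sum_nonpos fun v hv => le_of_not_gt (Finset.mem_filter.1 hv).2
    rw [← h1]
    rw [← h2]
    simpa [hT] using h3
  have hC : ∑ v ∈ T, ‖b v‖ ^ 2 ≤ 1 := by
    rw [← htr']
    exact Finset.sum_le_sum_of_subset_of_nonneg (Finset.filter_subset _ _)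
      (fun v _ _ => sq_nonneg _)
  have hCS : (∑ v ∈ T, (⟪s, b v⟫:ℝ)) ^ 2 ≤
      (∑ v ∈ T, ((⟪s, b v⟫:ℝ) / ‖b v‖) ^ 2) * ∑ v ∈ T, ‖b v‖ ^ 2 := by
    have := Finset.sum_mul_sq_le_sq_mul_sq T (fun v => (⟪s, b v⟫:ℝ) / ‖b v‖) (fun v => ‖b v‖)
    rw [Finset.sum_congr rfl (fun v hv => div_mul_cancel₀ (⟪s, b v⟫:ℝ)
      (norm_ne_zero_iff.2 (hbne v hv)))] at this
    exact this
  have hQnn : 0 ≤ ∑ v ∈ T, ((⟪s, b v⟫:ℝ) / ‖b v‖) ^ 2 :=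
    Finset.sum_nonneg fun v _ => sq_nonneg _
  have hQ : ‖s‖ ^ 4 ≤ ∑ v ∈ T, ((⟪s, b v⟫:ℝ) / ‖b v‖) ^ 2 := by
    nlinarith [hA, hC, hCS, hQnn, sq_nonneg (‖s‖^2)]
  -- the representation
  set φ : V → EuclideanSpace ℝ (Fin (n + n)) := fun v =>
    if 0 < (⟪s, b v⟫:ℝ) then ap (‖b v‖⁻¹ • b v) 0
    else ap 0 (EuclideanSpace.single (e v) 1) with hφ
  set hv : EuclideanSpace ℝ (Fin (n + n)) := ap (‖s‖⁻¹ • s) 0 with hhv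
  have inner_single : ∀ v w : V, v ≠ w →
      (⟪(EuclideanSpace.single (e v) 1 : EuclideanSpace ℝ (Fin n)),
        EuclideanSpace.single (e w) 1⟫:ℝ) = 0 := by
    intro v w hvw
    rw [euclid_inner]
    refine Finset.sum_eq_zero fun i _ => ?_
    have hne : e v ≠ e w := e.injective.ne hvw
    simp only [EuclideanSpace.single_apply]
    by_cases h1 : i = e v
    · rw [if_neg (h1 ▸ fun hh => hne (h1 ▸ hh) : ¬ i = e w)]; ring
    · rw [if_neg h1]; ring
  have hcons : ∀ v : V, (⟪hv, φ v⟫:ℝ) =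
      if 0 < (⟪s, b v⟫:ℝ) then ‖s‖⁻¹ * (‖b v‖⁻¹ * ⟪s, b v⟫) else 0 := by
    intro v
    simp only [hhv, hφ]
    by_cases hg : 0 < (⟪s, b v⟫:ℝ)
    · rw [if_pos hg, if_pos hg, ap_inner]
      rw [inner_zero_left, add_zero, real_inner_smul_left, real_inner_smul_right]
    · rw [if_neg hg, if_neg hg, ap_inner]
      simp
  have hmem : (∑ v, (⟪hv, φ v⟫:ℝ) ^ 2) ∈ {x : ℝ | ∃ (d : ℕ)
      (φ : V → EuclideanSpace ℝ (Fin d)) (h : EuclideanSpace ℝ (Fin d)),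
      (∀ v, ‖φ v‖ = 1) ∧ (∀ v w, G.Adj v w → ⟪φ v, φ w⟫ ≤ 0) ∧
      ‖h‖ = 1 ∧ (∀ v, 0 ≤ ⟪h, φ v⟫) ∧ x = ∑ v, ⟪h, φ v⟫ ^ 2} := by
    refine ⟨n + n, φ, hv, ?_, ?_, ?_, ?_, rfl⟩
    · intro v
      refine norm_one_of_sq ?_
      simp only [hφ]
      by_cases hg : 0 < (⟪s, b v⟫:ℝ)
      · rw [if_pos hg, ap_norm_sq]
        have : b v ≠ 0 := by
          intro h0; rw [h0, inner_zero_right] at hg; exact lt_irrefl _ hg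
        rw [norm_smul]
        simp [norm_inv, inv_mul_cancel₀ (norm_ne_zero_iff.2 this)]
      · rw [if_neg hg, ap_norm_sq]
        simp [EuclideanSpace.norm_single]
    · intro v w hadj
      simp only [hφ]
      by_cases hgv : 0 < (⟪s, b v⟫:ℝ) <;> by_cases hgw : 0 < (⟪s, b w⟫:ℝ)
      · rw [if_pos hgv, if_pos hgw, ap_inner]
        simp only [inner_zero_left, add_zero]
        rw [real_inner_smul_left, real_inner_smul_right, ← hb v w]
        have h1 : (0:ℝ) ≤ ‖b v‖⁻¹ := by positivity
        have h2 : (0:ℝ) ≤ ‖b w‖⁻¹ := by positivity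
        have h3 := hedge v w hadj
        calc ‖b v‖⁻¹ * (‖b w‖⁻¹ * B v w) ≤ ‖b v‖⁻¹ * (‖b w‖⁻¹ * 0) := by
              exact mul_le_mul_of_nonneg_left (mul_le_mul_of_nonneg_left h3 h2) h1
          _ = 0 := by ring
      · rw [if_pos hgv, if_neg hgw, ap_inner]
        simp
      · rw [if_neg hgv, if_pos hgw, ap_inner]
        simp
      · rw [if_neg hgv, if_neg hgw, ap_inner]
        rw [inner_single v w hadj.ne]
        simp
    · refine norm_one_of_sq ?_
      rw [hhv, ap_norm_sq, norm_smul]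
      simp [norm_inv, inv_mul_cancel₀ hns.ne']
    · intro v
      rw [hcons v]
      by_cases hg : 0 < (⟪s, b v⟫:ℝ)
      · rw [if_pos hg]; positivity
      · rw [if_neg hg]
  refine le_trans ?_ (le_csSup (bddAbove_repset G) hmem)
  have hval : ∑ v, (⟪hv, φ v⟫:ℝ) ^ 2 =
      ∑ v ∈ T, (‖s‖⁻¹ * (‖b v‖⁻¹ * ⟪s, b v⟫)) ^ 2 := by
    rw [Finset.sum_congr rfl fun v (_ : v ∈ Finset.univ) => congrArg (· ^ 2) (hcons v)]
    rw [← Finset.sum_filter_add_sum_filter_not Finset.univ (fun v => 0 < (⟪s, b v⟫:ℝ))]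
    have hz : ∑ v ∈ Finset.univ.filter (fun v => ¬ 0 < (⟪s, b v⟫:ℝ)),
        (if 0 < (⟪s, b v⟫:ℝ) then ‖s‖⁻¹ * (‖b v‖⁻¹ * ⟪s, b v⟫) else 0) ^ 2 = 0 := by
      refine Finset.sum_eq_zero fun v hvv => ?_
      rw [if_neg (Finset.mem_filter.1 hvv).2]
      ring
    rw [hz, add_zero, hT]
    refine Finset.sum_congr rfl fun v hvv => ?_
    rw [if_pos (Finset.mem_filter.1 hvv).2]
  rw [hval, hxs]
  have hrw : ∀ v ∈ T, (‖s‖⁻¹ * (‖b v‖⁻¹ * ⟪s, b v⟫)) ^ 2 =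
      ‖s‖⁻¹ ^ 2 * ((⟪s, b v⟫:ℝ) / ‖b v‖) ^ 2 := by
    intro v _
    rw [div_eq_inv_mul]; ring
  rw [Finset.sum_congr rfl hrw, ← Finset.mul_sum]
  have h4 : ‖s‖⁻¹ ^ 2 * ‖s‖ ^ 4 = ‖s‖ ^ 2 := by
    field_simp
  calc ‖s‖ ^ 2 = ‖s‖⁻¹ ^ 2 * ‖s‖ ^ 4 := h4.symm
    _ ≤ ‖s‖⁻¹ ^ 2 * ∑ v ∈ T, ((⟪s, b v⟫:ℝ) / ‖b v‖) ^ 2 :=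
        mul_le_mul_of_nonneg_left hQ (by positivity)

theorem thetaPlus_eq_obtuse_rep {V : Type*} [Fintype V] (G : SimpleGraph V) :
    G.thetaPlus = sSup {x : ℝ | ∃ (d : ℕ) (φ : V → EuclideanSpace ℝ (Fin d))
      (h : EuclideanSpace ℝ (Fin d)),
      (∀ v, ‖φ v‖ = 1) ∧ (∀ v w, G.Adj v w → ⟪φ v, φ w⟫ ≤ 0) ∧
      ‖h‖ = 1 ∧ (∀ v, 0 ≤ ⟪h, φ v⟫) ∧ x = ∑ v, ⟪h, φ v⟫ ^ 2} := by
  rw [SimpleGraph.thetaPlus]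
  apply le_antisymm
  · exact Real.sSup_le (fun x hx => sdp_le_rep G x hx)
      (le_csSup (bddAbove_repset G) (zero_mem_repset G))
  · exact Real.sSup_le (fun x hx => rep_le_sdp G x hx) (sdp_nonneg G)
end
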